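/- Let t₀ > 0, β > 0, p > 0 and a ∈ ℝ^m with a_i ≥ 0 for all i. Let x : [t₀,∞) → H satisfy x(t) ∈ L(F, F(x(t₀)) + a) for all t ≥ t₀, and assume S(F(x(t))) ≠ ∅ for every t ≥ t₀. Assume there exists R ≥ 0 such that for every y ∈ LP_w(F, F(x(t₀)) + a) and every ε > 0 there is z' ∈ H with F(z') = F(y) and ‖z'‖ ≤ R + ε. Let z : [t₀,∞) → H be such that for every t ≥ t₀, z(t) minimizes u ↦ max_{i=1,…,m}(f_i(u) − f_i(x(t))) + (β/(2t^p))‖u‖² over H. Then ‖z(t)‖ ≤ R for all t ≥ t₀. -/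

import Mathlib

open Filter Topology
open scoped NNReal

/-- If `x(t) ∈ L(F, F(x(t₀)) + a)` for all `t ≥ t₀` (`a ≥ 0`),
`S(F(x(t))) ≠ ∅` for all `t ≥ t₀`, and `R` bounds the infimal norms over the fibers of `F`
over `LP_w(F, F(x(t₀)) + a)`, then the generalized regularization path
`z(t) = argmin_u max_i (f_i(u) − f_i(x(t))) + (β/(2t^p))‖u‖²` satisfies `‖z(t)‖ ≤ R`. -/
theorem stmt_6
    {H : Type*} [NormedAddCommGroup H] [InnerProductSpace ℝ H] [CompleteSpace H]
    {m : ℕ} (hm : 0 < m) (f : Fin m → H → ℝ)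
    (hconv : ∀ i, ConvexOn ℝ Set.univ (f i))
    (hdiff : ∀ i, Differentiable ℝ (f i))
    (hlip : ∀ i, ∃ L : ℝ≥0, LipschitzWith L (gradient (f i)))
    (t₀ β p : ℝ) (ht₀ : 0 < t₀) (hβ : 0 < β) (hp : 0 < p)
    (a : Fin m → ℝ) (ha : ∀ i, 0 ≤ a i)
    (x : ℝ → H)
    (hxlevel : ∀ t, t₀ ≤ t → ∀ i, f i (x t) ≤ f i (x t₀) + a i)
    (hS : ∀ t, t₀ ≤ t →
      ∃ u : H, ∀ y : H, (⨆ i, (f i u - f i (x t))) ≤ ⨆ i, (f i y - f i (x t)))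
    (R : ℝ) (hR : 0 ≤ R)
    (hRbound : ∀ y : H,
      ((∀ i, f i y ≤ f i (x t₀) + a i) ∧ ¬ ∃ u : H, ∀ i, f i u < f i y) →
      ∀ ε : ℝ, 0 < ε → ∃ z' : H, (∀ i, f i z' = f i y) ∧ ‖z'‖ ≤ R + ε)
    (z : ℝ → H)
    (hz : ∀ t, t₀ ≤ t → ∀ u : H,
      (⨆ i, (f i (z t) - f i (x t))) + β / (2 * t ^ p) * ‖z t‖ ^ 2 ≤
        (⨆ i, (f i u - f i (x t))) + β / (2 * t ^ p) * ‖u‖ ^ 2) :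
    ∀ t, t₀ ≤ t → ‖z t‖ ≤ R := by
  haveI : Nonempty (Fin m) := ⟨⟨0, hm⟩⟩
  intro t ht
  have htpos : 0 < t := lt_of_lt_of_le ht₀ ht
  have hc : 0 < β / (2 * t ^ p) := by
    apply div_pos hβ
    have := Real.rpow_pos_of_pos htpos p
    linarith
  set g : H → Fin m → ℝ := fun y i => f i y - f i (x t) with hg
  have hbdd : ∀ y : H, BddAbove (Set.range (g y)) := fun y =>
    Set.Finite.bddAbove (Set.finite_range _)
  obtain ⟨u, hu⟩ := hS t ht
  -- u is weakly Pareto optimal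
  have hwp : ¬ ∃ v : H, ∀ i, f i v < f i u := by
    rintro ⟨v, hv⟩
    obtain ⟨j, hj⟩ := Finite.exists_max (g v)
    have h1 : (⨆ i, g v i) ≤ g v j := ciSup_le hj
    have h2 : g v j < g u j := by simp only [hg]; linarith [hv j]
    have h3 : g u j ≤ ⨆ i, g u i := le_ciSup (hbdd u) j
    have := hu v
    simp only [hg] at *
    linarith
  -- u is in the level set
  have hsup0 : (⨆ i, g u i) ≤ 0 := by
    have := hu (x t)
    simpa [hg] using this
  have hlev : ∀ i, f i u ≤ f i (x t₀) + a i := by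
    intro i
    have h1 : g u i ≤ ⨆ j, g u j := le_ciSup (hbdd u) i
    have h2 := hxlevel t ht i
    simp only [hg] at h1
    linarith
  -- conclude via ε-argument
  refine le_of_forall_pos_le_add ?_
  intro ε hε
  obtain ⟨z', hz'f, hz'n⟩ := hRbound u ⟨hlev, hwp⟩ ε hε
  have hgz' : (⨆ i, g z' i) = ⨆ i, g u i := by
    congr 1; funext i; simp [hg, hz'f i]
  have hle : (⨆ i, g z' i) ≤ ⨆ i, g (z t) i := by
    rw [hgz']; exact hu (z t)
  have hmin := hz t ht z'
  replace hmin : (⨆ i, g (z t) i) + β / (2 * t ^ p) * ‖z t‖ ^ 2 ≤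
      (⨆ i, g z' i) + β / (2 * t ^ p) * ‖z'‖ ^ 2 := hmin
  have hsq : ‖z t‖ ^ 2 ≤ ‖z'‖ ^ 2 := by
    nlinarith [hc]
  have : ‖z t‖ ≤ ‖z'‖ := by
    nlinarith [norm_nonneg (z t), norm_nonneg z']
  linarith
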